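/- Let p = a_Δ x^Δ + ... + a_δ x^δ be a polynomial with non-negative integer coefficients summing to n ≥ 4, with a_Δ ≥ 1 and Δ > δ. If p has a root z with |z| = n−1, then p(x) = x^Δ + (n−1)x^{Δ−1} and z = −(n−1). -/

import Mathlib

open Polynomial Finset

theorem root_of_max_modulus (p : Polynomial ℕ) (n : ℕ) (hn : 4 ≤ n)
    (hdeg : p.natTrailingDegree < p.natDegree) (hsum : p.eval 1 = n)
    (z : ℂ) (hz : Polynomial.aeval z p = 0) (hmod : ‖z‖ = (n : ℝ) - 1) :
    p = Polynomial.X ^ p.natDegree + Polynomial.C (n - 1) * Polynomial.X ^ (p.natDegree - 1) ∧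
      z = -((n : ℂ) - 1) := by
  have hp0 : p ≠ 0 := by
    intro h
    rw [h] at hdeg
    simp at hdeg
  set Δ := p.natDegree with hΔdef
  have hΔ1 : 1 ≤ Δ := by omega
  have haΔ : 1 ≤ p.coeff Δ :=
    Nat.one_le_iff_ne_zero.2 (Polynomial.leadingCoeff_ne_zero.mpr hp0)
  have hr1 : (1:ℝ) < (n:ℝ) - 1 := by
    have : (4:ℝ) ≤ (n:ℝ) := by exact_mod_cast hn
    linarith
  have hr0 : (0:ℝ) < (n:ℝ) - 1 := by linarith
  have hΔ' : Δ = (Δ - 1) + 1 := by omega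
  have hpow : ((n:ℝ) - 1) ^ Δ = ((n:ℝ) - 1) ^ (Δ - 1) * ((n:ℝ) - 1) := by
    conv_lhs => rw [hΔ']
    rw [pow_succ]
  -- sum of coefficients
  have hsum' : ∑ i ∈ Finset.range (Δ + 1), p.coeff i = n := by
    rw [← hsum, Polynomial.eval_eq_sum_range]
    simp [hΔdef]
  have hm : (∑ i ∈ Finset.range Δ, p.coeff i) + p.coeff Δ = n := by
    rw [← hsum', Finset.sum_range_succ]
  -- aeval as a sum
  have hz' : (p.coeff Δ : ℂ) * z ^ Δ = - ∑ i ∈ Finset.range Δ, (p.coeff i : ℂ) * z ^ i := by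
    have h := Polynomial.aeval_eq_sum_range (R := ℕ) (p := p) z
    rw [hz] at h
    simp only [nsmul_eq_mul] at h
    rw [Finset.sum_range_succ] at h
    linear_combination -h
  -- absolute value chain
  have habs : (p.coeff Δ : ℝ) * ((n:ℝ) - 1) ^ Δ ≤
      ∑ i ∈ Finset.range Δ, (p.coeff i : ℝ) * ((n:ℝ) - 1) ^ i := by
    have h1 : ‖(p.coeff Δ : ℂ) * z ^ Δ‖ = (p.coeff Δ : ℝ) * ((n:ℝ) - 1) ^ Δ := by
      simp [map_mul, map_pow, hmod]
    rw [← h1, hz', norm_neg]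
    refine (norm_sum_le _ _).trans_eq ?_
    refine Finset.sum_congr rfl fun i _ => ?_
    simp [map_mul, map_pow, hmod]
  have hterm : ∀ i ∈ Finset.range Δ,
      (p.coeff i : ℝ) * ((n:ℝ) - 1) ^ i ≤ (p.coeff i : ℝ) * ((n:ℝ) - 1) ^ (Δ - 1) := by
    intro i hi
    have hi' : i ≤ Δ - 1 := by
      have := Finset.mem_range.mp hi; omega
    exact mul_le_mul_of_nonneg_left (pow_le_pow_right₀ hr1.le hi') (Nat.cast_nonneg _)
  have hsumcast : ((∑ i ∈ Finset.range Δ, p.coeff i : ℕ) : ℝ)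
      = ∑ i ∈ Finset.range Δ, (p.coeff i : ℝ) := by push_cast; rfl
  have habs2 : (p.coeff Δ : ℝ) * ((n:ℝ) - 1) ^ Δ ≤
      ((n:ℝ) - (p.coeff Δ : ℝ)) * ((n:ℝ) - 1) ^ (Δ - 1) := by
    refine habs.trans ((Finset.sum_le_sum hterm).trans_eq ?_)
    rw [← Finset.sum_mul, ← hsumcast]
    congr 1
    have := hm
    have h4 : ((∑ i ∈ Finset.range Δ, p.coeff i : ℕ) : ℝ) + (p.coeff Δ : ℝ) = (n:ℝ) := by
      exact_mod_cast congrArg (Nat.cast : ℕ → ℝ) this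
    linarith
  -- deduce leading coefficient = 1
  have hpowpos : (0:ℝ) < ((n:ℝ) - 1) ^ (Δ - 1) := pow_pos hr0 _
  have hkey : (p.coeff Δ : ℝ) * ((n:ℝ) - 1) ≤ (n:ℝ) - (p.coeff Δ : ℝ) := by
    rw [hpow] at habs2
    nlinarith [habs2, hpowpos]
  have haΔ1 : p.coeff Δ = 1 := by
    have h1 : (1:ℝ) ≤ (p.coeff Δ : ℝ) := by exact_mod_cast haΔ
    have hnR : (4:ℝ) ≤ (n:ℝ) := by exact_mod_cast hn
    have : (p.coeff Δ : ℝ) ≤ 1 := by nlinarith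
    have : p.coeff Δ ≤ 1 := by exact_mod_cast this
    omega
  have hmval : ∑ i ∈ Finset.range Δ, p.coeff i = n - 1 := by omega
  have hmcast : ((∑ i ∈ Finset.range Δ, p.coeff i : ℕ) : ℝ) = (n:ℝ) - 1 := by
    rw [hmval, Nat.cast_sub (by omega : 1 ≤ n)]; simp
  -- equality forces termwise equality
  have heqsum : ∑ i ∈ Finset.range Δ, (p.coeff i : ℝ) * ((n:ℝ) - 1) ^ i =
      ∑ i ∈ Finset.range Δ, (p.coeff i : ℝ) * ((n:ℝ) - 1) ^ (Δ - 1) := by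
    have hub : ∑ i ∈ Finset.range Δ, (p.coeff i : ℝ) * ((n:ℝ) - 1) ^ (Δ - 1)
        = ((n:ℝ) - 1) ^ Δ := by
      rw [← Finset.sum_mul, ← hsumcast, hmcast, hpow]
      ring
    have hlb : ((n:ℝ) - 1) ^ Δ ≤ ∑ i ∈ Finset.range Δ, (p.coeff i : ℝ) * ((n:ℝ) - 1) ^ i := by
      have := habs; rw [haΔ1] at this; simpa using this
    have h2 := Finset.sum_le_sum hterm
    linarith
  have hzero : ∀ i < Δ - 1, p.coeff i = 0 := by
    intro i hi
    have heq := (Finset.sum_eq_sum_iff_of_le hterm).mp heqsum i (Finset.mem_range.mpr (by omega))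
    by_contra hne
    have hc : (0:ℝ) < (p.coeff i : ℝ) := by
      exact_mod_cast Nat.pos_of_ne_zero hne
    have hlt : ((n:ℝ) - 1) ^ i < ((n:ℝ) - 1) ^ (Δ - 1) := pow_lt_pow_right₀ hr1 hi
    nlinarith
  have hcΔ1 : p.coeff (Δ - 1) = n - 1 := by
    rw [← hmval]
    rw [Finset.sum_eq_single (Δ - 1)]
    · intro b hb hne
      have hb' := Finset.mem_range.mp hb
      exact hzero b (by omega)
    · intro h
      exact absurd (Finset.mem_range.mpr (by omega)) h
  -- the polynomial identity
  have hpeq : p = Polynomial.X ^ Δ + Polynomial.C (n - 1) * Polynomial.X ^ (Δ - 1) := by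
    ext k
    rw [Polynomial.coeff_add, Polynomial.coeff_X_pow, Polynomial.coeff_C_mul,
      Polynomial.coeff_X_pow]
    rcases lt_trichotomy k Δ with hk | hk | hk
    · rcases eq_or_ne k (Δ - 1) with hk1 | hk1
      · rw [if_neg (by omega : ¬ k = Δ), if_pos hk1, hk1, hcΔ1, zero_add, mul_one]
      · rw [hzero k (by omega), if_neg (by omega : ¬ k = Δ), if_neg hk1, mul_zero,
          add_zero]
    · rw [hk, haΔ1, if_pos rfl, if_neg (by omega), mul_zero, add_zero]
    · rw [Polynomial.coeff_eq_zero_of_natDegree_lt hk, if_neg (by omega), if_neg (by omega),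
        mul_zero, add_zero]
  refine ⟨hpeq, ?_⟩
  -- determine z
  have hzne : z ≠ 0 := by
    intro h
    rw [h] at hmod
    simp at hmod
    linarith
  have hcast : ((n - 1 : ℕ) : ℂ) = (n : ℂ) - 1 := by
    push_cast [Nat.cast_sub (by omega : 1 ≤ n)]; ring
  rw [hpeq] at hz
  simp only [map_add, map_mul, map_pow, Polynomial.aeval_X, Polynomial.aeval_C] at hz
  rw [show (algebraMap ℕ ℂ) (n - 1) = (((n:ℕ) - 1 : ℕ) : ℂ) from eq_natCast _ _, hcast] at hz
  have hfac : z ^ (Δ - 1) * (z + ((n:ℂ) - 1)) = 0 := by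
    have hp : z ^ Δ = z ^ (Δ - 1) * z := by
      conv_lhs => rw [hΔ']
      rw [pow_succ]
    rw [hp] at hz
    linear_combination hz
  rcases mul_eq_zero.mp hfac with h | h
  · exact absurd h (pow_ne_zero _ hzne)
  · linear_combination h
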